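/- Let N ≥ 1, let α ∈ (0,1), let ε ∈ (0, 2·min(α, 1−α)], and let T : ℝ^N → ℝ^N be an α-averaged operator with Fix T ≠ ∅. Let x₀ ∈ ℝ^N and let the sequences (x_k)_{k≥0} and (η_k)_{k≥1} be given by the Online Relaxation Method: η₁ = η₂ = 1, x₁ = T(x₀), x₂ = T(x₁), and for every k ≥ 2, assuming x_{k−1} ≠ x_{k−2} for all k ≥ 2, η_{k+1} = (2−ε)·η_k/(2α·η_k + 1 − (η_{k−1}·‖x_k − x_{k−1}‖)/(η_k·‖x_{k−1} − x_{k−2}‖)) + ε/(4α) and x_{k+1} = η_{k+1}·T(x_k) + (1−η_{k+1})·x_k. Then (x_k) converges to a point of Fix T. -/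

import Mathlib

open Filter Topology

/-- `T` is an `α`-averaged operator on `ℝ^N` (Euclidean norm). -/
def IsAveragedOp {N : ℕ} (α : ℝ)
    (T : EuclideanSpace ℝ (Fin N) → EuclideanSpace ℝ (Fin N)) : Prop :=
  ∀ x y : EuclideanSpace ℝ (Fin N),
    ‖T x - T y‖ ^ 2 + ((1 - α) / α) * ‖(x - T x) - (y - T y)‖ ^ 2 ≤ ‖x - y‖ ^ 2

variable {E : Type*} [NormedAddCommGroup E] [InnerProductSpace ℝ E]

lemma aux_nonexp {α : ℝ} (hα0 : 0 < α) (u v : E)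
    (h : ‖u + v‖ ^ 2 + ((1 - α) / α) * ‖v‖ ^ 2 ≤ ‖u‖ ^ 2) :
    ‖u + α⁻¹ • v‖ ≤ ‖u‖ := by
  have h1 := norm_add_sq_real u v
  have h2 := norm_add_sq_real u (α⁻¹ • v)
  rw [real_inner_smul_right, norm_smul, Real.norm_eq_abs,
    abs_of_pos (inv_pos.2 hα0)] at h2
  have key : ‖u + α⁻¹ • v‖ ^ 2 ≤ ‖u‖ ^ 2 := by
    have hd : (1 - α) / α = 1/α - 1 := by field_simp
    rw [hd] at h
    have hinv : α⁻¹ = 1/α := by field_simp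
    rw [h2, hinv]
    have hα0' : (0:ℝ) < 1/α := by positivity
    nlinarith [sq_nonneg (‖v‖), sq_nonneg (1/α - 1), mul_pos hα0' hα0']
  have := norm_nonneg (u + α⁻¹ • v)
  nlinarith [norm_nonneg u]

lemma aux_resmono (S : E → E) (hS : ∀ a b : E, ‖S a - S b‖ ≤ ‖a - b‖)
    {lam : ℝ} (h0 : 0 ≤ lam) (h1 : lam ≤ 1) (ξ : E) :
    ‖S (ξ + lam • (S ξ - ξ)) - (ξ + lam • (S ξ - ξ))‖ ≤ ‖S ξ - ξ‖ := by
  set ξ' := ξ + lam • (S ξ - ξ) with hξ'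
  have hid : S ξ' - ξ' = (S ξ' - S ξ) + (1 - lam) • (S ξ - ξ) := by
    rw [hξ']; module
  rw [hid]
  calc ‖(S ξ' - S ξ) + (1 - lam) • (S ξ - ξ)‖
      ≤ ‖S ξ' - S ξ‖ + ‖(1 - lam) • (S ξ - ξ)‖ := norm_add_le _ _
    _ ≤ ‖ξ' - ξ‖ + (1 - lam) * ‖S ξ - ξ‖ := by
        rw [norm_smul, Real.norm_eq_abs, abs_of_nonneg (by linarith)]
        exact add_le_add (hS _ _) le_rfl
    _ = lam * ‖S ξ - ξ‖ + (1 - lam) * ‖S ξ - ξ‖ := by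
        rw [hξ']; simp [norm_smul, abs_of_nonneg h0]
    _ = ‖S ξ - ξ‖ := by ring

lemma aux_fejer (S : E → E) (hS : ∀ a b : E, ‖S a - S b‖ ≤ ‖a - b‖)
    {z : E} (hz : S z = z) {lam : ℝ} (h0 : 0 ≤ lam) (h1 : lam ≤ 1) (ξ : E) :
    ‖ξ + lam • (S ξ - ξ) - z‖ ^ 2 ≤ ‖ξ - z‖ ^ 2 - lam * (1 - lam) * ‖S ξ - ξ‖ ^ 2 := by
  have hb : ‖(ξ - z) + (S ξ - ξ)‖ ^ 2 ≤ ‖ξ - z‖ ^ 2 := by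
    have : (ξ - z) + (S ξ - ξ) = S ξ - S z := by rw [hz]; abel
    rw [this]
    have h := hS ξ z
    nlinarith [norm_nonneg (S ξ - S z), norm_nonneg (ξ - z)]
  have h1' := norm_add_sq_real (ξ - z) (S ξ - ξ)
  have h2' := norm_add_sq_real (ξ - z) (lam • (S ξ - ξ))
  rw [real_inner_smul_right, norm_smul, Real.norm_eq_abs, abs_of_nonneg h0] at h2'
  have he : ξ + lam • (S ξ - ξ) - z = (ξ - z) + lam • (S ξ - ξ) := by abel
  rw [he, h2']
  nlinarith [sq_nonneg ‖S ξ - ξ‖]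


set_option maxHeartbeats 4000000 in
/-- Convergence of the Online Relaxation Method (ORM): the relaxed iterates with
online-tuned relaxation parameters converge to a fixed point of `T`. -/
theorem stmt_17 {N : ℕ} (hN : 1 ≤ N) {α ε : ℝ} (hα : α ∈ Set.Ioo (0 : ℝ) 1)
    (hε : ε ∈ Set.Ioc (0 : ℝ) (2 * min α (1 - α)))
    (T : EuclideanSpace ℝ (Fin N) → EuclideanSpace ℝ (Fin N))
    (hT : IsAveragedOp α T) (hfix : ∃ z, T z = z)
    (x₀ : EuclideanSpace ℝ (Fin N)) (x : ℕ → EuclideanSpace ℝ (Fin N)) (η : ℕ → ℝ)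
    (hx0 : x 0 = x₀) (hη1 : η 1 = 1) (hη2 : η 2 = 1)
    (hx1 : x 1 = T (x 0)) (hx2 : x 2 = T (x 1))
    (hne : ∀ k : ℕ, 2 ≤ k → x (k - 1) ≠ x (k - 2))
    (hηrec : ∀ k : ℕ, 2 ≤ k →
      η (k + 1) = (2 - ε) * η k
          / (2 * α * η k + 1 - (η (k - 1) * ‖x k - x (k - 1)‖) / (η k * ‖x (k - 1) - x (k - 2)‖))
        + ε / (4 * α))
    (hxrec : ∀ k : ℕ, 2 ≤ k → x (k + 1) = η (k + 1) • T (x k) + (1 - η (k + 1)) • x k) :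
    ∃ xbar, T xbar = xbar ∧ Tendsto x atTop (𝓝 xbar) := by
  obtain ⟨hα0, hα1⟩ := hα
  obtain ⟨hε0, hεle⟩ := hε
  have hεα : ε ≤ 2 * α := le_trans hεle (by
    have := min_le_left α (1 - α); linarith)
  have hεα' : ε ≤ 2 * (1 - α) := le_trans hεle (by
    have := min_le_right α (1 - α); linarith)
  have hε1 : ε ≤ 1 := by
    rcases le_total α (1 - α) with h | h
    · have : min α (1 - α) = α := min_eq_left h
      rw [this] at hεle; linarith
    · have : min α (1 - α) = 1 - α := min_eq_right h
      rw [this] at hεle; linarith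
  set S : EuclideanSpace ℝ (Fin N) → EuclideanSpace ℝ (Fin N) :=
    fun ξ => ξ + α⁻¹ • (T ξ - ξ) with hSdef
  have hS : ∀ a b, ‖S a - S b‖ ≤ ‖a - b‖ := by
    intro a b
    have hrw : S a - S b = (a - b) + α⁻¹ • ((T a - T b) - (a - b)) := by
      simp only [hSdef]; module
    rw [hrw]
    apply aux_nonexp hα0
    have h1 : (a - b) + ((T a - T b) - (a - b)) = T a - T b := by abel
    have h2 : ‖(T a - T b) - (a - b)‖ = ‖(a - T a) - (b - T b)‖ := by
      rw [← norm_neg]; congr 1; abel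
    rw [h1, h2]; exact hT a b
  have hTS : ∀ ξ, T ξ = ξ + α • (S ξ - ξ) := by
    intro ξ
    have : α • (S ξ - ξ) = T ξ - ξ := by
      simp only [hSdef, add_sub_cancel_left, smul_smul,
        mul_inv_cancel₀ (ne_of_gt hα0), one_smul]
    rw [this]; abel
  set lam : ℕ → ℝ := fun k => α * η k with hlamdef
  have step : ∀ k, x (k + 1) = x k + lam (k + 1) • (S (x k) - x k) := by
    intro k
    match k with
    | 0 =>
      rw [hx1, hTS (x 0)]
      simp only [hlamdef, hη1, mul_one]
    | 1 =>
      rw [hx2, hTS (x 1)]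
      simp only [hlamdef, hη2, mul_one]
    | (m + 2) =>
      rw [hxrec (m + 2) (by omega), hTS (x (m + 2))]
      simp only [hlamdef]
      module
  have hbnd : ∀ k : ℕ, (ε/4 ≤ lam (k+1) ∧ lam (k+1) ≤ 1 - ε/4) ∧
      (ε/4 ≤ lam (k+2) ∧ lam (k+2) ≤ 1 - ε/4) := by
    intro k
    induction k with
    | zero =>
      have l1 : lam 1 = α := by simp [hlamdef, hη1]
      have l2 : lam 2 = α := by simp [hlamdef, hη2]
      rw [l1, l2]
      refine ⟨⟨by linarith, by linarith⟩, ⟨by linarith, by linarith⟩⟩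
    | succ n ih =>
      refine ⟨ih.2, ?_⟩
      obtain ⟨⟨h1l, h1u⟩, ⟨h2l, h2u⟩⟩ := ih
      have hl1pos : 0 < lam (n+1) := lt_of_lt_of_le (by linarith) h1l
      have hl2pos : 0 < lam (n+2) := lt_of_lt_of_le (by linarith) h2l
      have hη1pos : 0 < η (n+1) := by
        have h : lam (n+1) = α * η (n+1) := rfl
        nlinarith
      have hη2pos : 0 < η (n+2) := by
        have h : lam (n+2) = α * η (n+2) := rfl
        nlinarith
      set r0 := ‖S (x n) - x n‖ with hr0def
      set r1 := ‖S (x (n+1)) - x (n+1)‖ with hr1def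
      have hstep0 : x (n+1) - x n = lam (n+1) • (S (x n) - x n) := by
        rw [step n]; abel
      have hstep1 : x (n+2) - x (n+1) = lam (n+2) • (S (x (n+1)) - x (n+1)) := by
        rw [step (n+1)]; abel
      have hr0pos : 0 < r0 := by
        rcases (norm_nonneg (S (x n) - x n)).lt_or_eq with h | h
        · exact h
        · exfalso
          have hv : S (x n) - x n = 0 := by
            rw [← norm_eq_zero]; exact h.symm
          have heq : x (n+1) = x n := by rw [step n, hv, smul_zero, add_zero]
          have hne' := hne (n+2) (by omega)
          simp only [Nat.add_sub_cancel] at hne'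
          norm_num at hne'
          exact hne' heq
      have hnorm0 : ‖x (n+1) - x n‖ = lam (n+1) * r0 := by
        rw [hstep0, norm_smul, Real.norm_eq_abs, abs_of_pos hl1pos]
      have hnorm1 : ‖x (n+2) - x (n+1)‖ = lam (n+2) * r1 := by
        rw [hstep1, norm_smul, Real.norm_eq_abs, abs_of_pos hl2pos]
      have hr1le : r1 ≤ r0 := by
        have h := aux_resmono S hS (le_of_lt hl1pos) (by linarith : lam (n+1) ≤ 1) (x n)
        rw [← step n] at h
        exact h
      have hrec := hηrec (n+2) (by omega)
      simp only [Nat.add_sub_cancel] at hrec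
      norm_num at hrec
      rw [hnorm0, hnorm1] at hrec
      have hratio : (η (n+1) * (lam (n+2) * r1)) / (η (n+2) * (lam (n+1) * r0)) = r1 / r0 := by
        have e1 : lam (n+2) = α * η (n+2) := rfl
        have e2 : lam (n+1) = α * η (n+1) := rfl
        rw [e1, e2]
        field_simp
      rw [hratio] at hrec
      have hq0 : 0 ≤ r1 / r0 := by positivity
      have hq1 : r1 / r0 ≤ 1 := by
        rw [div_le_one hr0pos]; exact hr1le
      have hD : ε/2 ≤ 2 * α * η (n+2) + 1 - r1 / r0 := by
        have h : 2 * α * η (n+2) = 2 * lam (n+2) := by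
          have e : lam (n+2) = α * η (n+2) := rfl
          rw [e]; ring
        nlinarith
      have hDpos : 0 < 2 * α * η (n+2) + 1 - r1 / r0 := by linarith
      have hfrac0 : 0 ≤ (2 - ε) * η (n+2) / (2 * α * η (n+2) + 1 - r1 / r0) := by
        apply div_nonneg _ (le_of_lt hDpos)
        nlinarith
      have hfracle : (2 - ε) * η (n+2) / (2 * α * η (n+2) + 1 - r1 / r0) ≤ (2 - ε) / (2 * α) := by
        rw [div_le_div_iff₀ hDpos (by positivity)]
        have hD2 : 2 * lam (n+2) ≤ 2 * α * η (n+2) + 1 - r1 / r0 := by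
          have h : 2 * α * η (n+2) = 2 * lam (n+2) := by
            have e : lam (n+2) = α * η (n+2) := rfl
            rw [e]; ring
          nlinarith
        have e : lam (n+2) = α * η (n+2) := rfl
        nlinarith
      have hlam3 : lam (n+1+2) = α * ((2 - ε) * η (n+2) / (2 * α * η (n+2) + 1 - r1 / r0)) + ε/4 := by
        have e : lam (n+1+2) = α * η (n+3) := rfl
        rw [e, hrec]
        field_simp
      constructor
      · rw [hlam3]
        nlinarith
      · rw [hlam3]
        have h1 : α * ((2 - ε) * η (n+2) / (2 * α * η (n+2) + 1 - r1 / r0)) ≤ α * ((2 - ε) / (2 * α)) :=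
          mul_le_mul_of_nonneg_left hfracle (le_of_lt hα0)
        have h2 : α * ((2 - ε) / (2 * α)) = (2 - ε) / 2 := by field_simp
        rw [h2] at h1
        linarith
  have hlamb : ∀ k, ε/4 ≤ lam (k+1) ∧ lam (k+1) ≤ 1 - ε/4 := fun k => (hbnd k).1
  obtain ⟨z, hz⟩ := hfix
  have hzS : S z = z := by
    simp only [hSdef, hz, sub_self, smul_zero, add_zero]
  set r : ℕ → ℝ := fun k => ‖S (x k) - x k‖ with hrdef
  have hfej : ∀ w, S w = w → ∀ k,
      ‖x (k+1) - w‖ ^ 2 ≤ ‖x k - w‖ ^ 2 - lam (k+1) * (1 - lam (k+1)) * r k ^ 2 := by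
    intro w hw k
    have h0 : 0 ≤ lam (k+1) := le_trans (by linarith) (hlamb k).1
    have h1 : lam (k+1) ≤ 1 := le_trans (hlamb k).2 (by linarith)
    have h := aux_fejer S hS hw h0 h1 (x k)
    rw [← step k] at h
    exact h
  have hprod : ∀ k, ε/4 * (ε/4) ≤ lam (k+1) * (1 - lam (k+1)) := by
    intro k
    obtain ⟨hl, hu⟩ := hlamb k
    nlinarith
  have hanti : ∀ w, S w = w → ∀ k, ‖x (k+1) - w‖ ^ 2 ≤ ‖x k - w‖ ^ 2 := by
    intro w hw k
    have h := hfej w hw k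
    have h2 := hprod k
    have h3 : 0 ≤ lam (k+1) * (1 - lam (k+1)) := le_trans (by positivity) h2
    have h4 : 0 ≤ lam (k+1) * (1 - lam (k+1)) * r k ^ 2 := mul_nonneg h3 (sq_nonneg _)
    linarith
  -- convergence of a := ‖x k - z‖^2
  set a : ℕ → ℝ := fun k => ‖x k - z‖ ^ 2 with hadef
  have haanti : Antitone a := antitone_nat_of_succ_le (fun k => hanti z hzS k)
  have habdd : BddBelow (Set.range a) := ⟨0, by rintro _ ⟨k, rfl⟩; positivity⟩
  have haL : Tendsto a atTop (𝓝 (⨅ k, a k)) := tendsto_atTop_ciInf haanti habdd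
  have hdiff0 : Tendsto (fun k => a k - a (k+1)) atTop (𝓝 0) := by
    have h2 : Tendsto (fun k => a (k+1)) atTop (𝓝 (⨅ k, a k)) :=
      haL.comp (tendsto_add_atTop_nat 1)
    have := haL.sub h2
    simpa using this
  have hr2le : ∀ k, r k ^ 2 ≤ (a k - a (k+1)) * (16 / ε^2) := by
    intro k
    have h := hfej z hzS k
    have h2 := hprod k
    have hε2 : 0 < ε^2 := by positivity
    have key : ε^2/16 * r k ^ 2 ≤ a k - a (k+1) := by
      have h3 : ε/4 * (ε/4) * r k ^2 ≤ lam (k+1) * (1 - lam (k+1)) * r k ^2 :=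
        mul_le_mul_of_nonneg_right h2 (sq_nonneg _)
      simp only [hadef]
      linarith
    have h4 := mul_le_mul_of_nonneg_right key (by positivity : (0:ℝ) ≤ 16 / ε^2)
    calc r k ^ 2 = ε^2/16 * r k ^2 * (16/ε^2) := by field_simp
      _ ≤ (a k - a (k+1)) * (16/ε^2) := h4
  have hr2 : Tendsto (fun k => r k ^ 2) atTop (𝓝 0) := by
    apply squeeze_zero (fun k => sq_nonneg (r k)) hr2le
    have := hdiff0.mul_const (16 / ε^2)
    simpa using this
  have hr0 : Tendsto r atTop (𝓝 0) := by
    have h := (Real.continuous_sqrt.tendsto 0).comp hr2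
    simp only [Real.sqrt_zero] at h
    have he : (Real.sqrt ∘ fun k => r k ^ 2) = r := by
      funext k
      simp [Function.comp, Real.sqrt_sq (norm_nonneg _)]
      exact Real.sqrt_sq (norm_nonneg _)
    rwa [he] at h
  -- boundedness and subsequence
  have hmem : ∀ k, x k ∈ Metric.closedBall z ‖x 0 - z‖ := by
    intro k
    rw [Metric.mem_closedBall, dist_eq_norm]
    have h := haanti (Nat.zero_le k)
    have h1 : ‖x k - z‖ = Real.sqrt (a k) := by
      simp [hadef, Real.sqrt_sq (norm_nonneg _)]
    have h2 : ‖x 0 - z‖ = Real.sqrt (a 0) := by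
      simp [hadef, Real.sqrt_sq (norm_nonneg _)]
    rw [h1, h2]
    exact Real.sqrt_le_sqrt h
  obtain ⟨xbar, -, φ, hφ, hconv⟩ :=
    tendsto_subseq_of_bounded Metric.isBounded_closedBall hmem
  have hSlip : LipschitzWith 1 S := by
    apply LipschitzWith.of_dist_le_mul
    intro a b
    rw [dist_eq_norm, dist_eq_norm]
    simpa using hS a b
  have hgcont : Continuous (fun ξ => ‖S ξ - ξ‖) :=
    (hSlip.continuous.sub continuous_id).norm
  have hSxbar : S xbar = xbar := by
    have h1 : Tendsto (fun j => ‖S (x (φ j)) - x (φ j)‖) atTop (𝓝 ‖S xbar - xbar‖) :=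
      (hgcont.tendsto xbar).comp hconv
    have h2 : Tendsto (fun j => r (φ j)) atTop (𝓝 0) :=
      hr0.comp hφ.tendsto_atTop
    have := tendsto_nhds_unique h1 h2
    rwa [norm_eq_zero, sub_eq_zero] at this
  have hTxbar : T xbar = xbar := by
    rw [hTS xbar, hSxbar, sub_self, smul_zero, add_zero]
  refine ⟨xbar, hTxbar, ?_⟩
  -- Fejér with xbar
  set b : ℕ → ℝ := fun k => ‖x k - xbar‖ ^ 2 with hbdef
  have hbanti : Antitone b := antitone_nat_of_succ_le (fun k => hanti xbar hSxbar k)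
  have hbbdd : BddBelow (Set.range b) := ⟨0, by rintro _ ⟨k, rfl⟩; positivity⟩
  have hbL : Tendsto b atTop (𝓝 (⨅ k, b k)) := tendsto_atTop_ciInf hbanti hbbdd
  have hbsub : Tendsto (fun j => b (φ j)) atTop (𝓝 0) := by
    have h1 : Tendsto (fun j => x (φ j) - xbar) atTop (𝓝 (xbar - xbar)) :=
      hconv.sub_const xbar
    rw [sub_self] at h1
    have h2 := (h1.norm).pow 2
    simpa using h2
  have hbend : Tendsto (fun j => b (φ j)) atTop (𝓝 (⨅ k, b k)) :=
    hbL.comp hφ.tendsto_atTop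
  have hinf0 : (⨅ k, b k) = 0 := tendsto_nhds_unique hbend hbsub
  rw [hinf0] at hbL
  have hnorm0 : Tendsto (fun k => ‖x k - xbar‖) atTop (𝓝 0) := by
    have h := (Real.continuous_sqrt.tendsto 0).comp hbL
    simp only [Real.sqrt_zero] at h
    have he : (Real.sqrt ∘ b) = fun k => ‖x k - xbar‖ := by
      funext k
      simp [hbdef, Function.comp, Real.sqrt_sq (norm_nonneg _)]
    rwa [he] at h
  exact tendsto_iff_norm_sub_tendsto_zero.mpr hnorm0
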